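/- Let n ≥ 1, R₀ ≥ 1, D₁, D₂ > 0, and let Λ_j, Λ_j* ⊂ ℝⁿ with Λ_j* + B(0, 1/R₀) ⊂ Λ_j for j = 1, 2. Let Φ₁, Φ₂ : ℝⁿ → ℝ be C² on open neighbourhoods of Λ₁, Λ₂. Fix {j,k} = {1,2} and 𝔥 = (a, h) ∈ ℝ × ℝⁿ, and assume the transversality bound |∇Φ_j(ζ) − ∇Φ_k(ζ − h)| ≥ D₁/D₂ for every ζ ∈ Λ_j ∩ (Λ_k + h). Let r ≥ 2 (D₂/D₁) R₀ and suppose ξ₀ ∈ (Λ_j* + B(0, 1/(2R₀))) ∩ (Λ_k* + h + B(0, 1/(2R₀))) satisfies |Φ_j(ξ₀) − Φ_k(ξ₀ − h) − a| ≤ 1/r. Then there exists ξ ∈ Σ_j(𝔥) with |ξ₀ − ξ| ≤ D₂/(D₁ r). -/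

import Mathlib

open MeasureTheory Filter
open scoped ENNReal RealInnerProductSpace FourierTransform

noncomputable section

abbrev Euc (n : ℕ) : Type := EuclideanSpace ℝ (Fin n)

/-- The wedge (cross-product magnitude) `|x ∧ y| = (|x|²|y|² − (x·y)²)^{1/2}`. -/
def wedge {F : Type*} [NormedAddCommGroup F] [InnerProductSpace ℝ F] (x y : F) : ℝ :=
  Real.sqrt (‖x‖ ^ 2 * ‖y‖ ^ 2 - ⟪x, y⟫ ^ 2)

/-- The surface `Σ_j(𝔥) = {ξ ∈ Λ_j ∩ (Λ_k + h) : Φ_j(ξ) = Φ_k(ξ − h) + a}`. -/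
def SigmaSet {n : ℕ} (Λj Λk : Set (Euc n)) (Φj Φk : Euc n → ℝ) (a : ℝ) (h : Euc n) :
    Set (Euc n) :=
  {ξ | ξ ∈ Λj ∧ ξ - h ∈ Λk ∧ Φj ξ = Φk (ξ - h) + a}

/-- Condition (A1) for the ordered pair `(j, k)`. -/
def CondA1 {n : ℕ} (Λj Λk : Set (Euc n)) (Φj Φk : Euc n → ℝ) (D₁ : ℝ) : Prop :=
  ∀ (a : ℝ) (h : Euc n), ∀ ξ ∈ SigmaSet Λj Λk Φj Φk a h, ∀ ξ' ∈ SigmaSet Λj Λk Φj Φk a h,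
    ∀ η ∈ Λk,
      D₁ * ‖ξ - ξ'‖ ≤
        wedge (gradient Φj ξ - gradient Φj ξ') (gradient Φj ξ - gradient Φk η)

/-- Condition (A2): `Φ` is `C^N` on a neighbourhood of `Λ` with all derivatives of order
`1 ≤ i ≤ N` bounded by `D₂` on `Λ`. -/
def CondA2 {n : ℕ} (N : ℕ) (Λ : Set (Euc n)) (Φ : Euc n → ℝ) (D₂ : ℝ) : Prop :=
  ∃ U : Set (Euc n), IsOpen U ∧ Λ ⊆ U ∧ ContDiffOn ℝ N Φ U ∧
    ∀ i : ℕ, 1 ≤ i → i ≤ N → ∀ ξ ∈ Λ, ‖iteratedFDeriv ℝ i Φ ξ‖ ≤ D₂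

/-- Assumption A on `(Λ₁, Λ₂)` with constants `D₁, D₂, N`. -/
def AssumptionA {n : ℕ} (N : ℕ) (D₁ D₂ : ℝ) (Λ₁ Λ₂ : Set (Euc n)) (Φ₁ Φ₂ : Euc n → ℝ) :
    Prop :=
  CondA1 Λ₁ Λ₂ Φ₁ Φ₂ D₁ ∧ CondA1 Λ₂ Λ₁ Φ₂ Φ₁ D₁ ∧ CondA2 N Λ₁ Φ₁ D₂ ∧ CondA2 N Λ₂ Φ₂ D₂

/-- The annulus `{1/16 ≤ |ξ| ≤ 16}`. -/
def Annulus (n : ℕ) : Set (Euc n) := {ξ | 1 / 16 ≤ ‖ξ‖ ∧ ‖ξ‖ ≤ 16}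


section AuxDescent

variable {E : Type*} [NormedAddCommGroup E] [InnerProductSpace ℝ E] [CompleteSpace E]

/-- At an interior minimiser of `z ↦ |F z| + κ‖z - ξ₀‖` where `F` does not vanish,
the gradient of `F` has norm at most `κ`. -/
lemma aux_no_interior_min (F : E → ℝ) (ζ ξ₀ : E) (ρ κ : ℝ) (u : E)
    (hgrad : HasGradientAt F u ζ) (hκ : 0 < κ) (hκu : κ < ‖u‖)
    (hF0 : F ζ ≠ 0) (hlt : ‖ζ - ξ₀‖ < ρ)
    (hmin : ∀ z : E, ‖z - ξ₀‖ ≤ ρ → |F ζ| + κ * ‖ζ - ξ₀‖ ≤ |F z| + κ * ‖z - ξ₀‖) :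
    False := by
  have hsabs : 0 < |F ζ| := abs_pos.mpr hF0
  set s : ℝ := F ζ with hs
  have hsne : s ≠ 0 := hF0
  set σ : ℝ := |s| / s with hσ
  have hσs : σ * s = |s| := div_mul_cancel₀ _ hsne
  have hσabs : |σ| = 1 := by
    rw [hσ, abs_div, abs_abs, div_self (abs_ne_zero.mpr hsne)]
  set w : E := (-s) • u with hw
  have hwnorm : ‖w‖ = |s| * ‖u‖ := by
    rw [hw, norm_smul, Real.norm_eq_abs, abs_neg]
  set γ : ℝ → E := fun t => ζ + t • w with hγdef
  have hγ0 : γ 0 = ζ := by simp [hγdef]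
  have hγ : HasDerivAt γ w 0 := by
    have h1 : HasDerivAt (fun t : ℝ => t • w) ((1:ℝ) • w) 0 :=
      (hasDerivAt_id (0:ℝ)).smul_const w
    simpa [hγdef] using h1.const_add ζ
  have hg : HasDerivAt (fun t => F (γ t)) ⟪u, w⟫ 0 := by
    have h1 := hgrad.hasFDerivAt.comp_hasDerivAt_of_eq 0 hγ hγ0.symm
    simpa [Function.comp_def, InnerProductSpace.toDual_apply_apply] using h1
  have hinner : ⟪u, w⟫ = -s * ‖u‖ ^ 2 := by
    rw [hw, real_inner_smul_right, real_inner_self_eq_norm_sq]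
  set m : ℝ := σ * ⟪u, w⟫ + κ * ‖w‖ with hm
  set φ : ℝ → ℝ := fun t => σ * F (γ t) + κ * ‖w‖ * t with hφdef
  have hφ : HasDerivAt φ m 0 := by
    have h1 := hg.const_mul σ
    have h2 : HasDerivAt (fun t : ℝ => κ * ‖w‖ * t) (κ * ‖w‖) 0 := by
      simpa using (hasDerivAt_id (0:ℝ)).const_mul (κ * ‖w‖)
    exact h1.add h2
  have hun : 0 < ‖u‖ := lt_trans hκ hκu
  have hmneg : m < 0 := by
    rw [hm, hinner, hwnorm]
    have e1 : σ * (-s * ‖u‖ ^ 2) = -(|s| * ‖u‖ ^ 2) := by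
      rw [show σ * (-s * ‖u‖ ^ 2) = -(σ * s * ‖u‖ ^ 2) by ring, hσs]
    rw [e1]
    nlinarith only [mul_pos hsabs hun, hκu, hκ, hsabs, hun]
  have hφ00 : φ 0 = |s| := by
    simp only [hφdef, hγ0, mul_zero, add_zero]
    rw [← hs, hσs]
  have hev : ∀ᶠ t in nhdsWithin (0:ℝ) (Set.Ioi 0), φ 0 ≤ φ t := by
    have hcσ : ContinuousAt (fun t => σ * F (γ t)) 0 :=
      continuousAt_const.mul hg.continuousAt
    have h0σ : 0 < σ * F (γ 0) := by rw [hγ0, ← hs, hσs]; exact hsabs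
    have hpos : ∀ᶠ t in nhds (0:ℝ), 0 < σ * F (γ t) :=
      hcσ.eventually (eventually_gt_nhds h0σ)
    have hcn : ContinuousAt (fun t => ‖γ t - ξ₀‖) 0 :=
      (hγ.continuousAt.sub continuousAt_const).norm
    have h0n : ‖γ 0 - ξ₀‖ < ρ := by rw [hγ0]; exact hlt
    have hXev : ∀ᶠ t in nhds (0:ℝ), ‖γ t - ξ₀‖ < ρ :=
      hcn.eventually (eventually_lt_nhds h0n)
    filter_upwards [hpos.filter_mono nhdsWithin_le_nhds,
      hXev.filter_mono nhdsWithin_le_nhds, self_mem_nhdsWithin] with t hpt hXt ht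
    have htpos : (0:ℝ) < t := ht
    have habs : |F (γ t)| = σ * F (γ t) := by
      rw [← abs_of_pos hpt, abs_mul, hσabs, one_mul]
    have hmin' := hmin (γ t) hXt.le
    have htriangle : ‖γ t - ξ₀‖ ≤ ‖ζ - ξ₀‖ + t * ‖w‖ := by
      have he : γ t - ξ₀ = (ζ - ξ₀) + t • w := by
        simp only [hγdef]; abel
      calc ‖γ t - ξ₀‖ = ‖(ζ - ξ₀) + t • w‖ := by rw [he]
        _ ≤ ‖ζ - ξ₀‖ + ‖t • w‖ := norm_add_le _ _
        _ = ‖ζ - ξ₀‖ + t * ‖w‖ := by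
            rw [norm_smul, Real.norm_eq_abs, abs_of_pos htpos]
    rw [hφ00]
    simp only [hφdef]
    rw [← habs]
    have hFζ : |F ζ| = |s| := by rw [hs]
    linarith only [hmin', hFζ, mul_le_mul_of_nonneg_left htriangle hκ.le]
  have hge : 0 ≤ m := by
    have hslope : Filter.Tendsto (slope φ 0) (nhdsWithin 0 {(0:ℝ)}ᶜ) (nhds m) :=
      hasDerivAt_iff_tendsto_slope.mp hφ
    have hslope' : Filter.Tendsto (slope φ 0) (nhdsWithin 0 (Set.Ioi 0)) (nhds m) :=
      hslope.mono_left (nhdsWithin_mono _ (fun x hx => ne_of_gt hx))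
    refine ge_of_tendsto hslope' ?_
    filter_upwards [hev, self_mem_nhdsWithin] with t hφt ht
    have htpos : (0:ℝ) < t := ht
    rw [slope_def_field]
    apply div_nonneg (by linarith only [hφt]) (by simpa using htpos.le)
  linarith only [hmneg, hge]

end AuxDescent

/-- **Lemma 2.3: points nearly on the resonance surface are close to `Σ_j(𝔥)`.** -/
theorem stmt7 {n : ℕ} (hn : 1 ≤ n) (R₀ D₁ D₂ : ℝ) (hR₀ : 1 ≤ R₀) (hD₁ : 0 < D₁)
    (hD₂ : 0 < D₂) (Λ₁ Λ₂ Λ₁s Λ₂s : Set (Euc n))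
    (hsub₁ : ∀ ξ ∈ Λ₁s, ∀ y : Euc n, ‖y‖ ≤ 1 / R₀ → ξ + y ∈ Λ₁)
    (hsub₂ : ∀ ξ ∈ Λ₂s, ∀ y : Euc n, ‖y‖ ≤ 1 / R₀ → ξ + y ∈ Λ₂)
    (Φ₁ Φ₂ : Euc n → ℝ)
    (hU₁ : ∃ U : Set (Euc n), IsOpen U ∧ Λ₁ ⊆ U ∧ ContDiffOn ℝ 2 Φ₁ U)
    (hU₂ : ∃ U : Set (Euc n), IsOpen U ∧ Λ₂ ⊆ U ∧ ContDiffOn ℝ 2 Φ₂ U)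
    (a : ℝ) (h : Euc n)
    (htrans : ∀ ζ : Euc n, ζ ∈ Λ₁ → ζ - h ∈ Λ₂ →
      D₁ / D₂ ≤ ‖gradient Φ₁ ζ - gradient Φ₂ (ζ - h)‖)
    (r : ℝ) (hr : 2 * (D₂ / D₁) * R₀ ≤ r)
    (ξ₀ : Euc n)
    (hξ₀₁ : ∃ η ∈ Λ₁s, ‖ξ₀ - η‖ ≤ 1 / (2 * R₀))
    (hξ₀₂ : ∃ η ∈ Λ₂s, ‖ξ₀ - (η + h)‖ ≤ 1 / (2 * R₀))
    (hval : |Φ₁ ξ₀ - Φ₂ (ξ₀ - h) - a| ≤ 1 / r) :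
    ∃ ξ ∈ SigmaSet Λ₁ Λ₂ Φ₁ Φ₂ a h, ‖ξ₀ - ξ‖ ≤ D₂ / (D₁ * r) := by
  classical
  obtain ⟨U₁, hU₁o, hU₁s, hU₁c⟩ := hU₁
  obtain ⟨U₂, hU₂o, hU₂s, hU₂c⟩ := hU₂
  have hR₀' : (0:ℝ) < R₀ := lt_of_lt_of_le one_pos hR₀
  set c : ℝ := D₁ / D₂ with hc
  have hc' : 0 < c := div_pos hD₁ hD₂
  have hr' : 0 < r := lt_of_lt_of_le (by positivity) hr
  set ε : ℝ := 1 / r with hε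
  have hε' : 0 < ε := by positivity
  set ρ : ℝ := 1 / (2 * R₀) with hρ
  have hρ' : 0 < ρ := by positivity
  have hερ : ε ≤ c * ρ := by
    have h1 : c * ρ * (2 * (D₂ / D₁) * R₀) = 1 := by
      rw [hc, hρ]; field_simp
    have h2 : c * ρ * (2 * (D₂ / D₁) * R₀) ≤ c * ρ * r :=
      mul_le_mul_of_nonneg_left hr (by positivity)
    rw [hε, div_le_iff₀ hr']
    calc (1:ℝ) = c * ρ * (2 * (D₂ / D₁) * R₀) := h1.symm
      _ ≤ c * ρ * r := h2
  set F : Euc n → ℝ := fun x => Φ₁ x - Φ₂ (x - h) - a with hF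
  set X : Set (Euc n) := Metric.closedBall ξ₀ ρ with hX
  obtain ⟨η₁, hη₁, hdist₁⟩ := hξ₀₁
  obtain ⟨η₂, hη₂, hdist₂⟩ := hξ₀₂
  have hρρ : ρ + ρ = 1 / R₀ := by
    rw [hρ, ← add_div, div_eq_div_iff (by positivity) (by positivity)]
    ring
  have hmem : ∀ ζ ∈ X, ζ ∈ Λ₁ ∧ ζ - h ∈ Λ₂ := by
    intro ζ hζ
    have hζd : ‖ζ - ξ₀‖ ≤ ρ := mem_closedBall_iff_norm.mp hζ
    constructor
    · have hb : ‖ζ - η₁‖ ≤ 1 / R₀ := by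
        calc ‖ζ - η₁‖ = ‖(ζ - ξ₀) + (ξ₀ - η₁)‖ := by rw [sub_add_sub_cancel]
          _ ≤ ‖ζ - ξ₀‖ + ‖ξ₀ - η₁‖ := norm_add_le _ _
          _ ≤ ρ + ρ := add_le_add hζd hdist₁
          _ = 1 / R₀ := hρρ
      have := hsub₁ η₁ hη₁ (ζ - η₁) hb
      rwa [add_sub_cancel] at this
    · have hb : ‖ζ - h - η₂‖ ≤ 1 / R₀ := by
        have he : ζ - h - η₂ = (ζ - ξ₀) + (ξ₀ - (η₂ + h)) := by abel
        calc ‖ζ - h - η₂‖ = ‖(ζ - ξ₀) + (ξ₀ - (η₂ + h))‖ := by rw [he]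
          _ ≤ ‖ζ - ξ₀‖ + ‖ξ₀ - (η₂ + h)‖ := norm_add_le _ _
          _ ≤ ρ + ρ := add_le_add hζd hdist₂
          _ = 1 / R₀ := hρρ
      have := hsub₂ η₂ hη₂ (ζ - h - η₂) hb
      rwa [add_sub_cancel] at this
  have hgrad : ∀ ζ : Euc n, ζ ∈ Λ₁ → ζ - h ∈ Λ₂ →
      HasGradientAt F (gradient Φ₁ ζ - gradient Φ₂ (ζ - h)) ζ := by
    intro ζ h₁ h₂
    have d₁ : DifferentiableAt ℝ Φ₁ ζ :=
      (hU₁c.contDiffAt (hU₁o.mem_nhds (hU₁s h₁))).differentiableAt (by norm_num)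
    have d₂ : DifferentiableAt ℝ Φ₂ (ζ - h) :=
      (hU₂c.contDiffAt (hU₂o.mem_nhds (hU₂s h₂))).differentiableAt (by norm_num)
    have g₁ : HasFDerivAt Φ₁
        (InnerProductSpace.toDual ℝ (Euc n) (gradient Φ₁ ζ)) ζ :=
      d₁.hasGradientAt.hasFDerivAt
    have g₂ : HasFDerivAt Φ₂
        (InnerProductSpace.toDual ℝ (Euc n) (gradient Φ₂ (ζ - h))) (ζ - h) :=
      d₂.hasGradientAt.hasFDerivAt
    have gsub : HasFDerivAt (fun x : Euc n => x - h)
        (ContinuousLinearMap.id ℝ (Euc n)) ζ := (hasFDerivAt_id ζ).sub_const h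
    have g₂' := g₂.comp ζ gsub
    rw [ContinuousLinearMap.comp_id] at g₂'
    have gF := (g₁.sub g₂').sub_const a
    rw [hasGradientAt_iff_hasFDerivAt, map_sub]
    exact gF
  have hnorm : ∀ ζ ∈ X, c ≤ ‖gradient Φ₁ ζ - gradient Φ₂ (ζ - h)‖ := fun ζ hζ =>
    htrans ζ (hmem ζ hζ).1 (hmem ζ hζ).2
  have hcont : ContinuousOn (fun z => |F z|) X := fun ζ hζ =>
    (((hgrad ζ (hmem ζ hζ).1 (hmem ζ hζ).2).continuousAt).abs).continuousWithinAt
  have hXne : X.Nonempty := ⟨ξ₀, Metric.mem_closedBall_self hρ'.le⟩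
  have hXcompact : IsCompact X := isCompact_closedBall _ _
  have hGξ₀ : |F ξ₀| ≤ ε := hval
  have key : ∀ θ : ℝ, 0 < θ → θ < 1 →
      ∃ ζ ∈ X, |F ζ| ≤ ε * (1 - θ) ∧ ‖ζ - ξ₀‖ ≤ ε / (θ * c) := by
    intro θ hθ0 hθ1
    have hθc : 0 < θ * c := mul_pos hθ0 hc'
    set H : Euc n → ℝ := fun z => |F z| + θ * c * ‖z - ξ₀‖ with hH
    have hHcont : ContinuousOn H X :=
      hcont.add ((continuous_const.mul
        ((continuous_id.sub continuous_const).norm)).continuousOn)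
    obtain ⟨ζ, hζX, hζmin⟩ := hXcompact.exists_isMinOn hXne hHcont
    have hmin0 : |F ζ| + θ * c * ‖ζ - ξ₀‖ ≤ ε := by
      have h1 := hζmin (Metric.mem_closedBall_self hρ'.le)
      have h2 : H ξ₀ = |F ξ₀| := by simp [hH]
      calc |F ζ| + θ * c * ‖ζ - ξ₀‖ = H ζ := rfl
        _ ≤ H ξ₀ := h1
        _ = |F ξ₀| := h2
        _ ≤ ε := hGξ₀
    by_cases hF0 : F ζ = 0
    · refine ⟨ζ, hζX, ?_, ?_⟩
      · rw [hF0, abs_zero]; nlinarith only [hε', hθ1]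
      · rw [le_div_iff₀ hθc]
        linarith only [hmin0, abs_nonneg (F ζ)]
    · have hb : ‖ζ - ξ₀‖ ≤ ρ := mem_closedBall_iff_norm.mp hζX
      have hboundary : ‖ζ - ξ₀‖ = ρ := by
        by_contra hne
        have hlt : ‖ζ - ξ₀‖ < ρ := lt_of_le_of_ne hb hne
        refine aux_no_interior_min F ζ ξ₀ ρ (θ * c)
          (gradient Φ₁ ζ - gradient Φ₂ (ζ - h))
          (hgrad ζ (hmem ζ hζX).1 (hmem ζ hζX).2) hθc ?_ hF0 hlt ?_
        · have h1 : θ * c < c := by nlinarith only [hθ1, hc']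
          exact lt_of_lt_of_le h1 (hnorm ζ hζX)
        · intro z hz
          exact hζmin (mem_closedBall_iff_norm.mpr hz)
      refine ⟨ζ, hζX, ?_, ?_⟩
      · rw [hboundary] at hmin0
        nlinarith only [hmin0, hερ, hθ0.le, hθ1, hε']
      · rw [hboundary] at hmin0 ⊢
        rw [le_div_iff₀ hθc]
        linarith only [hmin0, abs_nonneg (F ζ)]
  -- extract a limit point
  have hseq : ∀ k : ℕ, ∃ ζ ∈ X,
      |F ζ| ≤ ε * (1 / ((k:ℝ) + 1)) ∧ ‖ζ - ξ₀‖ ≤ ε / c * (1 + 1 / ((k:ℝ) + 1)) := by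
    intro k
    have hk1 : (0:ℝ) < (k:ℝ) + 1 := by positivity
    have hk2 : (0:ℝ) < (k:ℝ) + 2 := by positivity
    obtain ⟨ζ, hζX, hζ1, hζ2⟩ := key (((k:ℝ) + 1) / ((k:ℝ) + 2))
      (by positivity) ((div_lt_one hk2).mpr (by linarith))
    refine ⟨ζ, hζX, ?_, ?_⟩
    · have e1 : ε * (1 - ((k:ℝ) + 1) / ((k:ℝ) + 2)) = ε * (1 / ((k:ℝ) + 2)) := by
        field_simp
        norm_num
      have e2' : (1:ℝ) / ((k:ℝ) + 2) ≤ 1 / ((k:ℝ) + 1) :=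
        one_div_le_one_div_of_le hk1 (by linarith only [])
      have e2 : ε * (1 / ((k:ℝ) + 2)) ≤ ε * (1 / ((k:ℝ) + 1)) :=
        mul_le_mul_of_nonneg_left e2' hε'.le
      calc |F ζ| ≤ ε * (1 - ((k:ℝ) + 1) / ((k:ℝ) + 2)) := hζ1
        _ = ε * (1 / ((k:ℝ) + 2)) := e1
        _ ≤ ε * (1 / ((k:ℝ) + 1)) := e2
    · have e1 : ε / (((k:ℝ) + 1) / ((k:ℝ) + 2) * c) = ε / c * (1 + 1 / ((k:ℝ) + 1)) := by
        field_simp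
        ring
      calc ‖ζ - ξ₀‖ ≤ ε / (((k:ℝ) + 1) / ((k:ℝ) + 2) * c) := hζ2
        _ = ε / c * (1 + 1 / ((k:ℝ) + 1)) := e1
  choose ζseq hζseqX hζseqF hζseqd using hseq
  obtain ⟨ξstar, hξstarX, ψ, hψmono, hψtend⟩ := hXcompact.tendsto_subseq hζseqX
  have hψtend' : Filter.Tendsto (fun k => ζseq (ψ k)) Filter.atTop
      (nhdsWithin ξstar X) := by
    apply tendsto_nhdsWithin_of_tendsto_nhds_of_eventually_within _ hψtend
    exact Filter.Eventually.of_forall (fun k => hζseqX (ψ k))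
  have hinv : Filter.Tendsto (fun k : ℕ => 1 / ((ψ k : ℝ) + 1)) Filter.atTop (nhds 0) :=
    tendsto_one_div_add_atTop_nhds_zero_nat.comp hψmono.tendsto_atTop
  have hFstar : F ξstar = 0 := by
    have hFlim : Filter.Tendsto (fun k => |F (ζseq (ψ k))|) Filter.atTop
        (nhds (|F ξstar|)) := (hcont ξstar hξstarX).tendsto.comp hψtend'
    have hblim : Filter.Tendsto (fun k : ℕ => ε * (1 / ((ψ k : ℝ) + 1))) Filter.atTop
        (nhds 0) := by
      simpa using hinv.const_mul ε
    have hle : |F ξstar| ≤ 0 := by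
      refine le_of_tendsto_of_tendsto hFlim hblim ?_
      exact Filter.Eventually.of_forall (fun k => hζseqF (ψ k))
    exact abs_nonpos_iff.mp hle
  have hdstar : ‖ξstar - ξ₀‖ ≤ ε / c := by
    have hdlim : Filter.Tendsto (fun k => ‖ζseq (ψ k) - ξ₀‖) Filter.atTop
        (nhds (‖ξstar - ξ₀‖)) := ((hψtend.sub tendsto_const_nhds).norm)
    have hblim : Filter.Tendsto (fun k : ℕ => ε / c * (1 + 1 / ((ψ k : ℝ) + 1)))
        Filter.atTop (nhds (ε / c)) := by
      have := (tendsto_const_nhds (x := (1:ℝ)) (f := Filter.atTop (α := ℕ))).add hinv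
      simpa using (this.const_mul (ε / c))
    refine le_of_tendsto_of_tendsto hdlim hblim ?_
    exact Filter.Eventually.of_forall (fun k => hζseqd (ψ k))
  refine ⟨ξstar, ⟨(hmem ξstar hξstarX).1, (hmem ξstar hξstarX).2, ?_⟩, ?_⟩
  · have : Φ₁ ξstar - Φ₂ (ξstar - h) - a = 0 := hFstar
    linarith only [this]
  · have he : ε / c = D₂ / (D₁ * r) := by
      rw [hε, hc, div_div_eq_mul_div, one_div,
        div_eq_div_iff (by positivity) (by positivity)]
      field_simp
    rw [norm_sub_rev, ← he]
    exact hdstar
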